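/- Let m ≥ 2 and n = (m−1)² + 1. Suppose L ⊂ R^{m×m} is an n-dimensional subspace containing no rank-one matrix. If T ∈ R^{m×m×n} is any tensor whose n slices in the third direction form a basis of L, then rank_R(T) > n. -/
import Mathlib


open scoped BigOperators

/-- The real rank of a 3-tensor: the minimal number of rank-one tensors summing to it. -/
noncomputable def trank {m1 m2 m3 : ℕ} (T : Fin m1 → Fin m2 → Fin m3 → ℝ) : ℕ :=
  sInf {k | ∃ (x : Fin k → Fin m1 → ℝ) (y : Fin k → Fin m2 → ℝ) (z : Fin k → Fin m3 → ℝ),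
    ∀ i j l, T i j l = ∑ s, x s i * y s j * z s l}

open Matrix in
lemma aux_rank_zero {m : ℕ} {A : Matrix (Fin m) (Fin m) ℝ} (h : A.rank = 0) : A = 0 := by
  have h2 : LinearMap.range A.mulVecLin = ⊥ := Submodule.finrank_eq_zero.mp h
  have h3 : A.mulVecLin = 0 := LinearMap.range_eq_bot.mp h2
  ext i j
  have := congrFun (congrArg (fun f => f.toFun (Pi.single j 1)) h3) i
  simpa [Matrix.mulVecLin_apply, Matrix.mulVec_single] using this

open Matrix in
lemma aux_rank_vecMulVec_le {m : ℕ} (u v : Fin m → ℝ) :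
    (Matrix.vecMulVec u v).rank ≤ 1 := by
  rw [Matrix.vecMulVec_eq Unit u v]
  exact (Matrix.rank_mul_le_left _ _).trans
    ((Matrix.rank_le_card_width _).trans (by simp))

/-- every tensor has some decomposition -/
lemma aux_nonempty {m1 m2 m3 : ℕ} (T : Fin m1 → Fin m2 → Fin m3 → ℝ) :
    {k | ∃ (x : Fin k → Fin m1 → ℝ) (y : Fin k → Fin m2 → ℝ) (z : Fin k → Fin m3 → ℝ),
      ∀ i j l, T i j l = ∑ s, x s i * y s j * z s l}.Nonempty := by
  classical
  refine ⟨Fintype.card (Fin m1 × Fin m2 × Fin m3), ?_⟩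
  set e := (Fintype.equivFin (Fin m1 × Fin m2 × Fin m3)).symm
  refine ⟨fun s i => if (e s).1 = i then 1 else 0,
    fun s j => if (e s).2.1 = j then 1 else 0,
    fun s l => if (e s).2.2 = l then T (e s).1 (e s).2.1 (e s).2.2 else 0,
    fun i j l => ?_⟩
  dsimp only
  have hsum : ∑ s, ((if (e s).1 = i then (1:ℝ) else 0) * (if (e s).2.1 = j then 1 else 0) *
      (if (e s).2.2 = l then T (e s).1 (e s).2.1 (e s).2.2 else 0))
      = ∑ p : Fin m1 × Fin m2 × Fin m3, ((if p.1 = i then (1:ℝ) else 0) *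
        (if p.2.1 = j then 1 else 0) * (if p.2.2 = l then T p.1 p.2.1 p.2.2 else 0)) :=
    Fintype.sum_equiv e _ _ (fun s => rfl)
  rw [hsum, Fintype.sum_prod_type]
  simp [Fintype.sum_prod_type, ite_mul, mul_ite, Finset.sum_ite_eq, Finset.sum_ite_eq']

theorem stmt_17 (m n : ℕ) (hm : 2 ≤ m) (hn : n = (m - 1) ^ 2 + 1)
    (L : Submodule ℝ (Matrix (Fin m) (Fin m) ℝ))
    (hdim : Module.finrank ℝ L = n)
    (hnorank1 : ∀ A ∈ L, A.rank ≠ 1)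
    (T : Fin m → Fin m → Fin n → ℝ)
    (hind : LinearIndependent ℝ
      (fun p : Fin n => (Matrix.of fun i j => T i j p : Matrix (Fin m) (Fin m) ℝ)))
    (hspan : Submodule.span ℝ
      (Set.range fun p : Fin n => (Matrix.of fun i j => T i j p : Matrix (Fin m) (Fin m) ℝ)) = L) :
    n < trank T := by
  by_contra hle
  push_neg at hle
  have hmem : trank T ∈ {k | ∃ (x : Fin k → Fin m → ℝ) (y : Fin k → Fin m → ℝ)
      (z : Fin k → Fin n → ℝ), ∀ i j l, T i j l = ∑ s, x s i * y s j * z s l} :=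
    Nat.sInf_mem (aux_nonempty T)
  set k := trank T with hk
  obtain ⟨x, y, z, hxyz⟩ := hmem
  set W : Submodule ℝ (Matrix (Fin m) (Fin m) ℝ) :=
    Submodule.span ℝ (Set.range fun s : Fin k => Matrix.vecMulVec (x s) (y s)) with hWdef
  have hLW : L ≤ W := by
    rw [← hspan, Submodule.span_le]
    rintro _ ⟨p, rfl⟩
    have heq : (Matrix.of fun i j => T i j p : Matrix (Fin m) (Fin m) ℝ)
        = ∑ s, z s p • Matrix.vecMulVec (x s) (y s) := by
      ext i j
      rw [Matrix.sum_apply]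
      simp only [Matrix.of_apply, Matrix.smul_apply, Matrix.vecMulVec_apply, smul_eq_mul]
      rw [hxyz i j p]
      exact Finset.sum_congr rfl fun s _ => by ring
    dsimp only
    rw [heq]
    exact Submodule.sum_mem _ fun s _ =>
      Submodule.smul_mem _ _ (Submodule.subset_span ⟨s, rfl⟩)
  have hWk : Module.finrank ℝ W ≤ k :=
    (finrank_range_le_card _).trans (by simp)
  have hnW : n ≤ Module.finrank ℝ W := hdim ▸ Submodule.finrank_mono hLW
  have hWL : W = L := by
    refine (Submodule.eq_of_le_of_finrank_le hLW ?_).symm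
    rw [hdim]
    exact hWk.trans hle
  have hmemL : ∀ s : Fin k, Matrix.vecMulVec (x s) (y s) ∈ L := fun s => by
    rw [← hWL]
    exact Submodule.subset_span ⟨s, rfl⟩
  have hzero : ∀ s : Fin k, Matrix.vecMulVec (x s) (y s) = 0 := fun s => by
    have h1 : (Matrix.vecMulVec (x s) (y s)).rank ≤ 1 := aux_rank_vecMulVec_le _ _
    have h2 : (Matrix.vecMulVec (x s) (y s)).rank ≠ 1 := hnorank1 _ (hmemL s)
    exact aux_rank_zero (by omega)
  have hWbot : W = ⊥ := by
    rw [hWdef, Submodule.span_eq_bot]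
    rintro _ ⟨s, rfl⟩
    exact hzero s
  rw [hWbot] at hnW
  simp [hn] at hnW
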